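/- Let f = z_{j_1}⋯z_{j_t} be a monomial with m ∉ {j_1,…,j_t}, let I = {j_1,…,j_t} ∩ [q−1], and f_y = (z_1⋯z_{q−1}+1)(z_m+1). Then |S(f) ∩ S(f_y)| = 2^{m−t−1} − 2^{m−t−q+|I|}, where S(g) = {z ∈ F_2^m : g(z) = 1}. -/
import Mathlib

lemma card_fixed_on (m : ℕ) (K : Finset (Fin m)) (c : Fin m → ZMod 2) :
    (Finset.univ.filter (fun z : Fin m → ZMod 2 => ∀ j ∈ K, z j = c j)).card
      = 2 ^ (m - K.card) := by
  rw [← Fintype.card_subtype]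
  have e : {z : Fin m → ZMod 2 // ∀ j ∈ K, z j = c j} ≃ ({j : Fin m // j ∉ K} → ZMod 2) :=
    { toFun := fun z j => z.1 j.1
      invFun := fun g => ⟨fun j => if h : j ∈ K then c j else g ⟨j, h⟩,
        fun j hj => by simp [hj]⟩
      left_inv := fun z => by
        ext j
        by_cases h : j ∈ K
        · simp [h, z.2 j h]
        · simp [h]
      right_inv := fun g => by
        ext j
        simp [j.2] }
  rw [Fintype.card_congr e, Fintype.card_fun]
  have h2 : Fintype.card (ZMod 2) = 2 := rfl
  have h3 : Fintype.card {j : Fin m // j ∉ K} = m - K.card := by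
    rw [Fintype.card_subtype]
    have : Finset.univ.filter (fun j : Fin m => j ∉ K) = Kᶜ := by
      ext j; simp
    rw [this, Finset.card_compl, Fintype.card_fin]
  rw [h2, h3]

/-- Let f = z_{j_1}⋯z_{j_t} be a monomial (with variable set J) not
containing z_m, I = J ∩ [q−1], and f_y = (z_1⋯z_{q−1}+1)(z_m+1). Then
|S(f) ∩ S(f_y)| = 2^{m−t−1} − 2^{m−t−q+|I|}. -/
theorem monomial_without_last_variable_intersection_card
    (m q : ℕ) (hq : 2 ≤ q) (hm : q ≤ m)
    (J : Finset (Fin m)) (hJ : (⟨m - 1, by omega⟩ : Fin m) ∉ J) :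
    ((Finset.univ.filter (fun z : Fin m → ZMod 2 => (∏ j ∈ J, z j) = 1)) ∩
      (Finset.univ.filter (fun z : Fin m → ZMod 2 =>
        ((∏ i ∈ Finset.univ.filter (fun i : Fin m => (i : ℕ) < q - 1), z i) + 1) *
          (z ⟨m - 1, by omega⟩ + 1) = 1))).card
      = 2 ^ (m - J.card - 1) -
        2 ^ (m - J.card - (q - (J.filter (fun j : Fin m => (j : ℕ) < q - 1)).card)) := by
  set m' : Fin m := ⟨m - 1, by omega⟩ with hm'
  set L : Finset (Fin m) := Finset.univ.filter (fun i : Fin m => (i : ℕ) < q - 1) with hL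
  have hm'L : m' ∉ L := by
    intro hcon
    rw [hL, Finset.mem_filter] at hcon
    have hlt : m - 1 < q - 1 := hcon.2
    omega
  set c : Fin m → ZMod 2 := fun j => if j = m' then 0 else 1 with hc
  set K1 : Finset (Fin m) := insert m' J with hK1
  set K2 : Finset (Fin m) := insert m' (J ∪ L) with hK2
  -- characterization of elements
  have prodJ : ∀ z : Fin m → ZMod 2, (∏ j ∈ J, z j) = 1 ↔ ∀ j ∈ J, z j = 1 := by
    intro z
    have hne1 : ∀ a : ZMod 2, a ≠ 1 → a = 0 := by decide
    constructor
    · intro h j hj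
      by_contra hne
      rw [Finset.prod_eq_zero hj (hne1 _ hne)] at h
      exact one_ne_zero h.symm
    · exact Finset.prod_eq_one
  have hab : ∀ a b : ZMod 2, (a + 1) * (b + 1) = 1 ↔ a = 0 ∧ b = 0 := by decide
  have hne0 : ∀ a : ZMod 2, ¬ a = 0 ↔ a = 1 := by decide
  have prodL : ∀ z : Fin m → ZMod 2, (∏ i ∈ L, z i) = 0 ↔ ∃ i ∈ L, z i = 0 := by
    intro z; exact Finset.prod_eq_zero_iff
  have memK1 : ∀ z : Fin m → ZMod 2,
      (∀ j ∈ K1, z j = c j) ↔ (z m' = 0 ∧ ∀ j ∈ J, z j = 1) := by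
    intro z
    constructor
    · intro h
      refine ⟨by simpa [hc] using h m' (Finset.mem_insert_self _ _), ?_⟩
      intro j hj
      have hjm : j ≠ m' := by rintro rfl; exact hJ hj
      have := h j (Finset.mem_insert_of_mem hj)
      simpa [hc, hjm] using this
    · rintro ⟨h0, h1⟩ j hj
      rcases Finset.mem_insert.mp hj with rfl | hj
      · simpa [hc] using h0
      · have hjm : j ≠ m' := by rintro rfl; exact hJ hj
        simpa [hc, hjm] using h1 j hj
  have memK2 : ∀ z : Fin m → ZMod 2,
      (∀ j ∈ K2, z j = c j) ↔ (z m' = 0 ∧ (∀ j ∈ J, z j = 1) ∧ ∀ i ∈ L, z i = 1) := by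
    intro z
    constructor
    · intro h
      refine ⟨by simpa [hc] using h m' (Finset.mem_insert_self _ _), ?_, ?_⟩
      · intro j hj
        have hjm : j ≠ m' := by rintro rfl; exact hJ hj
        simpa [hc, hjm] using h j (Finset.mem_insert_of_mem (Finset.mem_union_left _ hj))
      · intro i hi
        have him : i ≠ m' := by rintro rfl; exact hm'L hi
        simpa [hc, him] using h i (Finset.mem_insert_of_mem (Finset.mem_union_right _ hi))
    · rintro ⟨h0, h1, h2⟩ j hj
      rcases Finset.mem_insert.mp hj with rfl | hj
      · simpa [hc] using h0
      rcases Finset.mem_union.mp hj with hj | hj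
      · have hjm : j ≠ m' := by rintro rfl; exact hJ hj
        simpa [hc, hjm] using h1 j hj
      · have hjm : j ≠ m' := by rintro rfl; exact hm'L hj
        simpa [hc, hjm] using h2 j hj
  have hset : ((Finset.univ.filter (fun z : Fin m → ZMod 2 => (∏ j ∈ J, z j) = 1)) ∩
      (Finset.univ.filter (fun z : Fin m → ZMod 2 =>
        ((∏ i ∈ L, z i) + 1) * (z m' + 1) = 1)))
      = (Finset.univ.filter (fun z : Fin m → ZMod 2 => ∀ j ∈ K1, z j = c j)) \
        (Finset.univ.filter (fun z : Fin m → ZMod 2 => ∀ j ∈ K2, z j = c j)) := by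
    ext z
    simp only [Finset.mem_inter, Finset.mem_sdiff, Finset.mem_filter, Finset.mem_univ, true_and]
    rw [prodJ z, hab, prodL z, memK1 z, memK2 z]
    constructor
    · rintro ⟨h1, ⟨i, hi, hi0⟩, h0⟩
      exact ⟨⟨h0, h1⟩, fun h => by
        have := h.2.2 i hi
        rw [this] at hi0
        exact one_ne_zero hi0⟩
    · rintro ⟨⟨h0, h1⟩, hnot⟩
      refine ⟨h1, ?_, h0⟩
      by_contra hno
      push_neg at hno
      exact hnot ⟨h0, h1, fun i hi => (hne0 (z i)).mp (hno i hi)⟩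
  -- cardinalities
  have hsub : (Finset.univ.filter (fun z : Fin m → ZMod 2 => ∀ j ∈ K2, z j = c j)) ⊆
      (Finset.univ.filter (fun z : Fin m → ZMod 2 => ∀ j ∈ K1, z j = c j)) := by
    intro z hz
    simp only [Finset.mem_filter, Finset.mem_univ, true_and] at hz ⊢
    intro j hj
    apply hz
    rcases Finset.mem_insert.mp hj with rfl | hj
    · exact Finset.mem_insert_self _ _
    · exact Finset.mem_insert_of_mem (Finset.mem_union_left _ hj)
  have hcardL : L.card = q - 1 := by
    have himg : L = (Finset.univ : Finset (Fin (q - 1))).image (Fin.castLE (by omega)) := by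
      ext i
      simp only [hL, Finset.mem_filter, Finset.mem_univ, true_and, Finset.mem_image]
      constructor
      · intro h
        exact ⟨⟨(i : ℕ), h⟩, by ext; rfl⟩
      · rintro ⟨a, -, rfl⟩
        exact a.2
    rw [himg, Finset.card_image_of_injective _ (Fin.castLE_injective _),
      Finset.card_univ, Fintype.card_fin]
  have hinter : J ∩ L = J.filter (fun j : Fin m => (j : ℕ) < q - 1) := by
    ext j; simp [hL, Finset.mem_inter]
  set s := (J.filter (fun j : Fin m => (j : ℕ) < q - 1)).card with hs
  have hsle : s ≤ q - 1 := by
    rw [hs, ← hinter]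
    exact le_trans (Finset.card_le_card Finset.inter_subset_right) hcardL.le
  have hK1card : K1.card = J.card + 1 := Finset.card_insert_of_notMem hJ
  have hm'JL : m' ∉ J ∪ L := by
    rw [Finset.mem_union]; rintro (h | h)
    · exact hJ h
    · exact hm'L h
  have hJLcard : (J ∪ L).card = J.card + (q - 1) - s := by
    have := Finset.card_union_add_card_inter J L
    rw [hinter, hcardL] at this
    omega
  have hK2card : K2.card = J.card + (q - 1) - s + 1 := by
    rw [hK2, Finset.card_insert_of_notMem hm'JL, hJLcard]
  -- free-coordinate bound: J, L\J and m' are disjoint within Fin m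
  have hbound : J.card + (q - 1) - s + 1 ≤ m := by
    have := Finset.card_le_univ K2
    rw [hK2card] at this
    simpa using this
  rw [hset, Finset.card_sdiff_of_subset hsub, card_fixed_on, card_fixed_on, hK1card, hK2card]
  congr 2 <;> omega
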